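/- For every k ≥ 1 and n ≡ 1 (mod k+1) with n ≥ k+2, there exists a connected k-truss on n vertices with exactly (n−1)(k+2)/2 edges; it can be obtained by chaining (n−1)/(k+1) copies of K_{k+2}, consecutively identified at single vertices. -/

import Mathlib

/-- A graph is a `k`-truss if it has no isolated vertices and every edge is
contained in at least `k` triangles. -/
def SimpleGraph.IsTruss {V : Type*} (G : SimpleGraph V) (k : ℕ) : Prop :=
  (∀ v : V, ∃ u : V, G.Adj v u) ∧
  ∀ ⦃u v : V⦄, G.Adj u v → k ≤ {w : V | G.Adj u w ∧ G.Adj v w}.ncard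

def chainGraph (n d : ℕ) : SimpleGraph (Fin n) where
  Adj u v := u ≠ v ∧ max u.val v.val ≤ d * (min u.val v.val / d) + d
  symm := by
    constructor
    intro u v ⟨h1, h2⟩
    exact ⟨h1.symm, by rwa [max_comm, min_comm]⟩
  loopless := ⟨fun u ⟨h, _⟩ => h rfl⟩

instance (n d : ℕ) : DecidableRel (chainGraph n d).Adj :=
  fun _ _ => inferInstanceAs (Decidable (_ ∧ _))

/-- lower end of the neighborhood interval of `v` -/
def nlo (d v : ℕ) : ℕ := if v % d = 0 then v - d else d * (v / d)

/-- upper end of the neighborhood interval of `v` -/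
def nhi (n d v : ℕ) : ℕ := min (d * (v / d) + d) (n - 1)

/-- Two distinct vertices in the same block are adjacent. -/
lemma block_adj {n d : ℕ} {t : ℕ} {u v : Fin n} (hd : 0 < d)
    (h1 : d * t ≤ u.val) (h2 : u.val ≤ d * t + d)
    (h3 : d * t ≤ v.val) (h4 : v.val ≤ d * t + d) (hne : u ≠ v) :
    (chainGraph n d).Adj u v := by
  refine ⟨hne, ?_⟩
  have hmin : d * t ≤ min u.val v.val := le_min h1 h3
  have ht : t ≤ min u.val v.val / d := Nat.le_div_iff_mul_le hd |>.2 (by rwa [mul_comm])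
  calc max u.val v.val ≤ d * t + d := max_le h2 h4
    _ ≤ d * (min u.val v.val / d) + d := by
        have := Nat.mul_le_mul_left d ht; omega

lemma adj_iff {n d : ℕ} (hd : 0 < d) {u v : Fin n} :
    (chainGraph n d).Adj u v ↔
      u.val ≠ v.val ∧ nlo d v.val ≤ u.val ∧ u.val ≤ nhi n d v.val := by
  have hun : u.val ≤ n - 1 := by omega
  constructor
  · rintro ⟨hne, hmax⟩
    have hne' : u.val ≠ v.val := fun h => hne (Fin.ext h)
    refine ⟨hne', ?_, ?_⟩
    · -- nlo d v ≤ u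
      rcases lt_or_gt_of_ne hne' with h | h
      · -- u < v : condition is  v ≤ d*(u/d)+d
        rw [max_eq_right h.le, min_eq_left h.le] at hmax
        unfold nlo
        split_ifs with hmod
        · -- d ∣ v
          have h1 : d * (u.val / d) ≤ u.val := Nat.mul_div_le _ _
          omega
        · -- v % d ≠ 0 : show d*(v/d) ≤ u
          by_contra hcon
          push_neg at hcon
          have h2 : u.val / d < v.val / d := by
            rw [Nat.div_lt_iff_lt_mul hd]
            calc u.val < d * (v.val / d) := hcon
              _ ≤ v.val / d * d := by rw [mul_comm]
          have h3 : d * (u.val / d) + d ≤ d * (v.val / d) := by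
            have h2' : u.val / d + 1 ≤ v.val / d := h2
            have := Nat.mul_le_mul_left d h2'
            rw [Nat.mul_add, Nat.mul_one] at this
            omega
          have h4 : d * (v.val / d) + v.val % d = v.val := Nat.div_add_mod _ _
          omega
      · -- u > v : lo v ≤ v < u
        have h1 : nlo d v.val ≤ v.val := by
          unfold nlo; split_ifs
          · omega
          · exact Nat.mul_div_le _ _
        omega
    · -- u ≤ nhi d v
      unfold nhi
      rcases lt_or_gt_of_ne hne' with h | h
      · -- u < v ≤ d*(v/d)+d
        have h1 : d * (v.val / d) + v.val % d = v.val := Nat.div_add_mod _ _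
        have h2 : v.val % d < d := Nat.mod_lt _ hd
        omega
      · rw [max_eq_left h.le, min_eq_right h.le] at hmax
        omega
  · rintro ⟨hne', hlo, hhi⟩
    refine ⟨fun h => hne' (congrArg Fin.val h), ?_⟩
    rcases lt_or_gt_of_ne hne' with h | h
    · -- u < v : need v ≤ d*(u/d)+d, given nlo d v ≤ u
      rw [max_eq_right h.le, min_eq_left h.le]
      unfold nlo at hlo
      split_ifs at hlo with hmod
      · -- v - d ≤ u, d ∣ v
        have hdvd : d ∣ v.val := Nat.dvd_of_mod_eq_zero hmod
        rcases Nat.eq_zero_or_pos v.val with h0 | h0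
        · omega
        have hvd : d ≤ v.val := Nat.le_of_dvd h0 hdvd
        have hdvd' : d ∣ (v.val - d) := (Nat.dvd_sub hdvd dvd_rfl)
        have h1 : (v.val - d) / d ≤ u.val / d := Nat.div_le_div_right hlo
        have h2 : d * ((v.val - d) / d) = v.val - d := Nat.mul_div_cancel' hdvd'
        have h3 := Nat.mul_le_mul_left d h1
        omega
      · -- d*(v/d) ≤ u
        have h1 : v.val / d ≤ u.val / d := by
          have := Nat.div_le_div_right (c := d) hlo
          rwa [Nat.mul_div_cancel_left _ hd] at this
        have h2 : d * (v.val / d) + v.val % d = v.val := Nat.div_add_mod _ _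
        have h3 := Nat.mul_le_mul_left d h1
        have h4 : v.val % d < d := Nat.mod_lt _ hd
        omega
    · -- u > v : need u ≤ d*(v/d)+d, given u ≤ nhi
      rw [max_eq_left h.le, min_eq_right h.le]
      unfold nhi at hhi
      omega
lemma degree_eq {n d m : ℕ} (hd : 2 ≤ d) (hm : 1 ≤ m) (hn : n = m * d + 1)
    (v : Fin n) :
    (chainGraph n d).degree v =
      if v.val % d = 0 ∧ v.val ≠ 0 ∧ v.val ≠ m * d then 2 * d else d := by
  have hd0 : 0 < d := by omega
  have hv : v.val < n := v.isLt
  have h1 : d * (v.val / d) + v.val % d = v.val := Nat.div_add_mod _ _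
  have h2 : v.val % d < d := Nat.mod_lt _ hd0
  have hbound : ∀ x ∈ (Finset.Icc (nlo d v.val) (nhi n d v.val)).erase v.val,
      x < n := by
    intro x hx
    rw [Finset.mem_erase, Finset.mem_Icc] at hx
    have : nhi n d v.val ≤ n - 1 := min_le_right _ _
    omega
  have hnf : (chainGraph n d).neighborFinset v = Finset.attachFin _ hbound := by
    ext u
    rw [SimpleGraph.mem_neighborFinset, Finset.mem_attachFin hbound,
      Finset.mem_erase, Finset.mem_Icc, (chainGraph n d).adj_comm, adj_iff hd0]
  have hvlo : nlo d v.val ≤ v.val := by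
    unfold nlo; split_ifs
    · omega
    · exact Nat.mul_div_le _ _
  have hvhi : v.val ≤ nhi n d v.val := by unfold nhi; omega
  have hdeg : (chainGraph n d).degree v = nhi n d v.val - nlo d v.val := by
    unfold SimpleGraph.degree
    rw [hnf, Finset.card_attachFin,
      Finset.card_erase_of_mem (Finset.mem_Icc.2 ⟨hvlo, hvhi⟩), Nat.card_Icc]
    omega
  rw [hdeg]
  -- arithmetic facts
  have hvm : v.val ≤ m * d := by omega
  have hdm : d * m = m * d := mul_comm d m
  have hdlem : d ≤ m * d := by
    calc d = 1 * d := (one_mul d).symm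
    _ ≤ m * d := Nat.mul_le_mul_right d hm
  have hqm : v.val < m * d → d * (v.val / d) + d ≤ m * d := by
    intro h
    have hlt : d * (v.val / d) < d * m := by omega
    have hql : v.val / d < m := Nat.lt_of_mul_lt_mul_left hlt
    have hql' : v.val / d + 1 ≤ m := hql
    have := Nat.mul_le_mul_left d hql'
    rw [Nat.mul_add, Nat.mul_one] at this
    omega
  have hne : v.val % d ≠ 0 → v.val ≠ m * d := by
    intro hr hv'
    exact hr (hv' ▸ Nat.mul_mod_left m d)
  have hdv : v.val % d = 0 → v.val ≠ 0 → d ≤ v.val := by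
    intro hr h0
    have hq1 : 1 ≤ v.val / d := by
      rcases Nat.eq_zero_or_pos (v.val / d) with h | h
      · rw [h] at h1; omega
      · exact h
    have := Nat.mul_le_mul_left d hq1
    omega
  unfold nhi nlo
  rcases Nat.eq_zero_or_pos (v.val % d) with hr | hr
  · by_cases h0 : v.val = 0
    · rw [if_pos hr, if_neg (by tauto)]
      rw [h0, Nat.zero_div]
      omega
    · by_cases hmd : v.val = m * d
      · rw [if_pos hr, if_neg (by tauto)]
        omega
      · rw [if_pos hr, if_pos ⟨hr, h0, hmd⟩]
        have := hqm (by omega)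
        have := hdv hr h0
        omega
  · have hmd := hne (by omega)
    rw [if_neg (by omega), if_neg (by omega)]
    have := hqm (by omega)
    omega
lemma adj_succ {n d : ℕ} (hd : 0 < d) {j : ℕ} (h : j + 1 < n) :
    (chainGraph n d).Adj ⟨j + 1, h⟩ ⟨j, by omega⟩ := by
  refine ⟨by simp [Fin.ext_iff], ?_⟩
  have h1 : d * (j / d) + j % d = j := Nat.div_add_mod _ _
  have h2 : j % d < d := Nat.mod_lt _ hd
  simp only []
  rw [max_eq_left (by simp), min_eq_right (by simp)]
  omega

lemma chain_connected {n d : ℕ} (hd : 0 < d) (hn : 0 < n) :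
    (chainGraph n d).Connected := by
  have key : ∀ i : ℕ, ∀ h : i < n, (chainGraph n d).Reachable ⟨i, h⟩ ⟨0, hn⟩ := by
    intro i
    induction i with
    | zero => intro h; exact SimpleGraph.Reachable.refl _
    | succ j ih =>
      intro h
      exact (adj_succ hd h).reachable.trans (ih (by omega))
  rw [SimpleGraph.connected_iff]
  refine ⟨?_, ⟨⟨0, hn⟩⟩⟩
  · intro u v
    have h1 := key u.val u.isLt
    have h2 := key v.val v.isLt
    simp only [Fin.eta] at h1 h2
    exact h1.trans h2.symm

theorem exists_connected_truss_min_edges (k n : ℕ) (hk : 1 ≤ k)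
    (hn : k + 2 ≤ n) (hmod : n % (k + 1) = 1) :
    ∃ G : SimpleGraph (Fin n), G.Connected ∧ G.IsTruss k ∧
      2 * G.edgeSet.ncard = (n - 1) * (k + 2) := by
  set d := k + 1 with hdk
  have hd : 2 ≤ d := by omega
  have hd0 : 0 < d := by omega
  set m := n / d with hmdef
  have hnm : n = m * d + 1 := by
    have h := Nat.div_add_mod n d
    rw [← hmdef] at h
    have : d * m = m * d := mul_comm d m
    omega
  have hm : 1 ≤ m := by
    rcases Nat.eq_zero_or_pos m with h | h
    · rw [h] at hnm; omega
    · exact h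
  have hdlem : d ≤ m * d := by
    calc d = 1 * d := (one_mul d).symm
    _ ≤ m * d := Nat.mul_le_mul_right d hm
  have hn0 : 0 < n := by omega
  refine ⟨chainGraph n d, chain_connected hd0 hn0, ⟨?_, ?_⟩, ?_⟩
  · -- no isolated vertices
    intro v
    rcases Nat.eq_zero_or_pos v.val with h0 | h0
    · refine ⟨⟨1, by omega⟩, ?_⟩
      have : v = ⟨0, hn0⟩ := by simp [Fin.ext_iff, h0]
      rw [this]
      exact ((chainGraph n d).adj_symm (adj_succ hd0 (by omega)))
    · obtain ⟨j, hj⟩ : ∃ j, v.val = j + 1 := ⟨v.val - 1, by omega⟩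
      have hjn : j + 1 < n := hj ▸ v.isLt
      refine ⟨⟨j, Nat.lt_of_succ_lt hjn⟩, ?_⟩
      have hv : v = ⟨j + 1, hjn⟩ := Fin.ext hj
      rw [hv]
      exact adj_succ hd0 hjn
  · -- every edge in ≥ k triangles
    intro u v huv
    obtain ⟨hne, hmax⟩ := huv
    set t := min u.val v.val / d with ht
    have hmin : d * t ≤ min u.val v.val := Nat.mul_div_le _ _
    have htop : d * t + d ≤ m * d := by
      have hminlt : min u.val v.val < m * d := by
        have : max u.val v.val < n := (max u.val v.val).lt_of_lt_of_le
          (by exact lt_of_le_of_lt (le_refl _) (max_lt_iff.mpr ⟨u.isLt, v.isLt⟩)) (le_refl n)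
        have hminmax : min u.val v.val < max u.val v.val := by
          rcases lt_or_gt_of_ne (fun h => hne (Fin.ext h) : u.val ≠ v.val) with h | h
          · rw [min_eq_left h.le, max_eq_right h.le]; exact h
          · rw [min_eq_right h.le, max_eq_left h.le]; exact h
        omega
      have hlt : d * t < d * m := by
        have : d * m = m * d := mul_comm d m
        omega
      have : t + 1 ≤ m := Nat.lt_of_mul_lt_mul_left hlt
      have h2 := Nat.mul_le_mul_right d this
      rw [Nat.add_mul, Nat.one_mul] at h2
      have : d * t = t * d := mul_comm d t
      omega
    set T : Finset ℕ := Finset.Icc (d * t) (d * t + d) \ {u.val, v.val} with hTdef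
    have hT : ∀ x ∈ T, x < n := by
      intro x hx
      rw [hTdef, Finset.mem_sdiff, Finset.mem_Icc] at hx
      omega
    have huIcc : u.val ∈ Finset.Icc (d * t) (d * t + d) := by
      rw [Finset.mem_Icc]
      constructor
      · exact le_trans hmin (min_le_left _ _)
      · exact le_trans (le_max_left _ _) hmax
    have hvIcc : v.val ∈ Finset.Icc (d * t) (d * t + d) := by
      rw [Finset.mem_Icc]
      constructor
      · exact le_trans hmin (min_le_right _ _)
      · exact le_trans (le_max_right _ _) hmax
    have hcardT : T.card = k := by
      rw [hTdef, Finset.card_sdiff_of_subset]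
      · rw [Nat.card_Icc, Finset.card_insert_of_notMem, Finset.card_singleton]
        · omega
        · simp only [Finset.mem_singleton]
          exact fun h => hne (Fin.ext h)
      · intro x hx
        simp only [Finset.mem_insert, Finset.mem_singleton] at hx
        rcases hx with h | h <;> rw [h]
        · exact huIcc
        · exact hvIcc
    have hsub : ↑(T.attachFin hT) ⊆
        {w : Fin n | (chainGraph n d).Adj u w ∧ (chainGraph n d).Adj v w} := by
      intro w hw
      rw [Finset.mem_coe, Finset.mem_attachFin] at hw
      rw [hTdef, Finset.mem_sdiff, Finset.mem_Icc] at hw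
      obtain ⟨⟨hw1, hw2⟩, hw3⟩ := hw
      simp only [Finset.mem_insert, Finset.mem_singleton] at hw3
      push_neg at hw3
      rw [Finset.mem_Icc] at huIcc hvIcc
      constructor
      · exact block_adj hd0 huIcc.1 huIcc.2 hw1 hw2
          (fun h => hw3.1 (by rw [← h]))
      · exact block_adj hd0 hvIcc.1 hvIcc.2 hw1 hw2
          (fun h => hw3.2 (by rw [← h]))
    calc k = T.card := hcardT.symm
      _ = (T.attachFin hT).card := (Finset.card_attachFin _ _).symm
      _ = (↑(T.attachFin hT) : Set (Fin n)).ncard := (Set.ncard_coe_finset _).symm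
      _ ≤ _ := Set.ncard_le_ncard hsub (Set.toFinite _)
  · -- edge count
    have hcard : (chainGraph n d).edgeSet.ncard = (chainGraph n d).edgeFinset.card := by
      rw [Set.ncard_eq_toFinset_card', Set.toFinset_card, SimpleGraph.edgeFinset_card]
    rw [hcard, ← SimpleGraph.sum_degrees_eq_twice_card_edges]
    have hdeg : ∀ v : Fin n, (chainGraph n d).degree v =
        (fun x => if x % d = 0 ∧ x ≠ 0 ∧ x ≠ m * d then 2 * d else d) v.val :=
      fun v => degree_eq hd hm hnm v
    rw [Finset.sum_congr rfl (fun v _ => hdeg v),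
      Fin.sum_univ_eq_sum_range (fun x => if x % d = 0 ∧ x ≠ 0 ∧ x ≠ m * d then 2 * d else d) n]
    have hsplit : ∀ x, (if x % d = 0 ∧ x ≠ 0 ∧ x ≠ m * d then 2 * d else d)
        = d + (if x % d = 0 ∧ x ≠ 0 ∧ x ≠ m * d then d else 0) := by
      intro x; split_ifs <;> omega
    rw [Finset.sum_congr rfl (fun x _ => hsplit x), Finset.sum_add_distrib,
      Finset.sum_const, Finset.card_range, smul_eq_mul, ← Finset.sum_filter]
    have hfil : (Finset.range n).filter (fun x => x % d = 0 ∧ x ≠ 0 ∧ x ≠ m * d)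
        = (Finset.Icc 1 (m - 1)).image (· * d) := by
      ext x
      simp only [Finset.mem_filter, Finset.mem_range, Finset.mem_image,
        Finset.mem_Icc]
      constructor
      · rintro ⟨hx, hx0, hxne, hxmd⟩
        refine ⟨x / d, ⟨?_, ?_⟩, ?_⟩
        · have h1 : d * (x / d) + x % d = x := Nat.div_add_mod _ _
          rcases Nat.eq_zero_or_pos (x / d) with h | h
          · rw [h] at h1; omega
          · exact h
        · have h1 : d * (x / d) ≤ x := Nat.mul_div_le _ _
          have hlt : d * (x / d) < d * m := by
            have : d * m = m * d := mul_comm d m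
            omega
          have := Nat.lt_of_mul_lt_mul_left hlt
          omega
        · rw [mul_comm]
          exact Nat.mul_div_cancel' (Nat.dvd_of_mod_eq_zero hx0)
      · rintro ⟨s, ⟨hs1, hs2⟩, rfl⟩
        have hsd : s * d ≤ (m - 1) * d := Nat.mul_le_mul_right d hs2
        have hmd : (m - 1) * d + d = m * d := by
          rw [← Nat.succ_mul]
          congr 1
          omega
        refine ⟨by omega, Nat.mul_mod_left s d, ?_, by omega⟩
        have : d ≤ s * d := by
          calc d = 1 * d := (one_mul d).symm
          _ ≤ s * d := Nat.mul_le_mul_right d hs1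
        omega
    rw [hfil, Finset.sum_const, Finset.card_image_of_injective _
      (fun a b h => Nat.eq_of_mul_eq_mul_right hd0 h), Nat.card_Icc, smul_eq_mul]
    -- now pure arithmetic
    have e1 : (n - 1) * (k + 2) = m * d * d + m * d := by
      rw [show n - 1 = m * d from by omega, show k + 2 = d + 1 from rfl]
      ring
    have e2 : n * d = m * d * d + d := by
      rw [hnm]; ring
    have e3 : (m - 1) * d + d = m * d := by
      rw [← Nat.succ_mul]
      congr 1
      omega
    have e4 : (m - 1 + 1 - 1) * d = (m - 1) * d := by simp
    omega
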